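/- For every interaction i0 ∈ I, the language recognized by the simplified automaton nfa_s(i0) equals the trace semantics σ(i0), i.e. L(nfa_s(i0)) = σ(i0). -/

import Mathlib

/-- An atomic communication action: the emission (`isEmission = true`) or
reception (`isEmission = false`) of a message on a lifeline. -/
structure MyAction (L M : Type) where
  lifeline : L
  isEmission : Bool
  message : M

/-- Interaction terms: constants are actions and the empty interaction,
`loopS` is unary, and `strict`, `alt` and `cr ℓ` (for every `ℓ ⊆ L`) are binary.
`seq = cr ∅` and `par = cr Set.univ`. -/
inductive Interaction (L M : Type) : Type where
  | empty : Interaction L M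
  | act : MyAction L M → Interaction L M
  | loopS : Interaction L M → Interaction L M
  | strict : Interaction L M → Interaction L M → Interaction L M
  | alt : Interaction L M → Interaction L M → Interaction L M
  | cr : Set L → Interaction L M → Interaction L M → Interaction L M

namespace Interaction

variable {L M : Type}

/-- The evasion predicate `i ↓ ℓ`. -/
inductive Evades : Interaction L M → Set L → Prop where
  | empty (ℓ : Set L) : Evades .empty ℓ
  | act (a : MyAction L M) (ℓ : Set L) : a.lifeline ∉ ℓ → Evades (.act a) ℓ
  | altL {i1 i2 : Interaction L M} {ℓ} : Evades i1 ℓ → Evades (.alt i1 i2) ℓ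
  | altR {i1 i2 : Interaction L M} {ℓ} : Evades i2 ℓ → Evades (.alt i1 i2) ℓ
  | strict {i1 i2 : Interaction L M} {ℓ} : Evades i1 ℓ → Evades i2 ℓ →
      Evades (.strict i1 i2) ℓ
  | cr {i1 i2 : Interaction L M} {ℓ' ℓ} : Evades i1 ℓ → Evades i2 ℓ →
      Evades (.cr ℓ' i1 i2) ℓ
  | loopS (i1 : Interaction L M) (ℓ : Set L) : Evades (.loopS i1) ℓ

/-- The pruning relation `i ⤳ℓ i'`. -/
inductive Prune : Interaction L M → Set L → Interaction L M → Prop where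
  | empty (ℓ : Set L) : Prune .empty ℓ .empty
  | act (a : MyAction L M) (ℓ : Set L) : a.lifeline ∉ ℓ → Prune (.act a) ℓ (.act a)
  | altL {i1 i2 i1' : Interaction L M} {ℓ} : Prune i1 ℓ i1' → ¬ Evades i2 ℓ →
      Prune (.alt i1 i2) ℓ i1'
  | altR {i1 i2 i2' : Interaction L M} {ℓ} : Prune i2 ℓ i2' → ¬ Evades i1 ℓ →
      Prune (.alt i1 i2) ℓ i2'
  | altBoth {i1 i2 i1' i2' : Interaction L M} {ℓ} : Prune i1 ℓ i1' → Prune i2 ℓ i2' →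
      Prune (.alt i1 i2) ℓ (.alt i1' i2')
  | strict {i1 i2 i1' i2' : Interaction L M} {ℓ} : Prune i1 ℓ i1' → Prune i2 ℓ i2' →
      Prune (.strict i1 i2) ℓ (.strict i1' i2')
  | cr {i1 i2 i1' i2' : Interaction L M} {ℓ' ℓ} : Prune i1 ℓ i1' → Prune i2 ℓ i2' →
      Prune (.cr ℓ' i1 i2) ℓ (.cr ℓ' i1' i2')
  | loopS {i1 i1' : Interaction L M} {ℓ} : Prune i1 ℓ i1' →
      Prune (.loopS i1) ℓ (.loopS i1')
  | loopSElim {i1 : Interaction L M} {ℓ} : ¬ Evades i1 ℓ → Prune (.loopS i1) ℓ .empty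

/-- The non-expression predicate `i ̸→a`. -/
inductive NoExpr : Interaction L M → MyAction L M → Prop where
  | empty (a : MyAction L M) : NoExpr .empty a
  | act {a' a : MyAction L M} : a' ≠ a → NoExpr (.act a') a
  | loopS {i1 : Interaction L M} {a} : NoExpr i1 a → NoExpr (.loopS i1) a
  | strictNoEvade {i1 i2 : Interaction L M} {a} : NoExpr i1 a →
      ¬ Evades i1 Set.univ → NoExpr (.strict i1 i2) a
  | strictBoth {i1 i2 : Interaction L M} {a} : NoExpr i1 a →
      NoExpr i2 a → NoExpr (.strict i1 i2) a
  | crNoEvade {i1 i2 : Interaction L M} {ℓ a} : NoExpr i1 a →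
      ¬ Evades i1 ({a.lifeline} \ ℓ) → NoExpr (.cr ℓ i1 i2) a
  | crBoth {i1 i2 : Interaction L M} {ℓ a} : NoExpr i1 a →
      NoExpr i2 a → NoExpr (.cr ℓ i1 i2) a
  | alt {i1 i2 : Interaction L M} {a} : NoExpr i1 a → NoExpr i2 a →
      NoExpr (.alt i1 i2) a

/-- The execution relation `i →a i'`. -/
inductive Exec : Interaction L M → MyAction L M → Interaction L M → Prop where
  | act (a : MyAction L M) : Exec (.act a) a .empty
  | loop {i1 i1' : Interaction L M} {a} : Exec i1 a i1' →
      Exec (.loopS i1) a (.strict i1' (.loopS i1))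
  | strictL {i1 i2 i1' : Interaction L M} {a} : Exec i1 a i1' →
      Exec (.strict i1 i2) a (.strict i1' i2)
  | crL {i1 i2 i1' : Interaction L M} {ℓ a} : Exec i1 a i1' →
      Exec (.cr ℓ i1 i2) a (.cr ℓ i1' i2)
  | strictR {i1 i2 i2' : Interaction L M} {a} : Exec i2 a i2' → Evades i1 Set.univ →
      Exec (.strict i1 i2) a i2'
  | crR {i1 i2 i1' i2' : Interaction L M} {ℓ a} : Exec i2 a i2' →
      Prune i1 ({a.lifeline} \ ℓ) i1' → Exec (.cr ℓ i1 i2) a (.cr ℓ i1' i2')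
  | altChoiceL {i1 i2 i1' : Interaction L M} {a} : Exec i1 a i1' → NoExpr i2 a →
      Exec (.alt i1 i2) a i1'
  | altChoiceR {i1 i2 i2' : Interaction L M} {a} : Exec i2 a i2' → NoExpr i1 a →
      Exec (.alt i1 i2) a i2'
  | altDelay {i1 i2 i1' i2' : Interaction L M} {a} : Exec i1 a i1' → Exec i2 a i2' →
      Exec (.alt i1 i2) a (.alt i1' i2')

/-- The trace semantics `σ(i)`, as a predicate: `Sem i t` iff `t ∈ σ(i)`. -/
inductive Sem : Interaction L M → List (MyAction L M) → Prop where
  | nil {i : Interaction L M} : Evades i Set.univ → Sem i []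
  | cons {i i' : Interaction L M} {a t} : Exec i a i' → Sem i' t → Sem i (a :: t)

/-- One execution step: `i → i'` iff `i →a i'` for some action `a`. -/
def Step (i i' : Interaction L M) : Prop := ∃ a, Exec i a i'

/-- `reach i = { i' | i →* i' }`. -/
def Reach (i : Interaction L M) : Set (Interaction L M) :=
  {i' | Relation.ReflTransGen Step i i'}

/-- One-step rewriting by the simplification system `R`, closed under contexts. -/
inductive Rw : Interaction L M → Interaction L M → Prop where
  | strictEmptyL (x : Interaction L M) : Rw (.strict .empty x) x
  | strictEmptyR (x : Interaction L M) : Rw (.strict x .empty) x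
  | crEmptyL (ℓ : Set L) (x : Interaction L M) : Rw (.cr ℓ .empty x) x
  | crEmptyR (ℓ : Set L) (x : Interaction L M) : Rw (.cr ℓ x .empty) x
  | altEmptyLoop (x : Interaction L M) : Rw (.alt .empty (.loopS x)) (.loopS x)
  | altLoopEmpty (x : Interaction L M) : Rw (.alt (.loopS x) .empty) (.loopS x)
  | altEmptyEmpty : Rw (Interaction.alt (L := L) (M := M) .empty .empty) .empty
  | loopEmpty : Rw (Interaction.loopS (L := L) (M := M) .empty) .empty
  | loopCongr {i i' : Interaction L M} : Rw i i' → Rw (.loopS i) (.loopS i')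
  | strictCongrL {i1 i1' i2 : Interaction L M} : Rw i1 i1' →
      Rw (.strict i1 i2) (.strict i1' i2)
  | strictCongrR {i1 i2 i2' : Interaction L M} : Rw i2 i2' →
      Rw (.strict i1 i2) (.strict i1 i2')
  | altCongrL {i1 i1' i2 : Interaction L M} : Rw i1 i1' → Rw (.alt i1 i2) (.alt i1' i2)
  | altCongrR {i1 i2 i2' : Interaction L M} : Rw i2 i2' → Rw (.alt i1 i2) (.alt i1 i2')
  | crCongrL {i1 i1' i2 : Interaction L M} {ℓ} : Rw i1 i1' →
      Rw (.cr ℓ i1 i2) (.cr ℓ i1' i2)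
  | crCongrR {i1 i2 i2' : Interaction L M} {ℓ} : Rw i2 i2' →
      Rw (.cr ℓ i1 i2) (.cr ℓ i1 i2')

end Interaction

namespace Interaction

open Relation

variable {L M : Type}

/-- Equivalence closure of rewriting. -/
abbrev BRel (i j : Interaction L M) : Prop := EqvGen Rw i j

lemma rtg_eqv {i j : Interaction L M} (h : ReflTransGen Rw i j) : BRel i j := by
  induction h with
  | refl => exact EqvGen.refl _
  | tail _ h ih => exact EqvGen.trans _ _ _ ih (EqvGen.rel _ _ h)

lemma eqvLoopS {i j : Interaction L M} (h : BRel i j) :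
    BRel (Interaction.loopS i) (Interaction.loopS j) := by
  induction h with
  | rel _ _ h => exact EqvGen.rel _ _ (Rw.loopCongr h)
  | refl _ => exact EqvGen.refl _
  | symm _ _ _ ih => exact EqvGen.symm _ _ ih
  | trans _ _ _ _ _ ih1 ih2 => exact EqvGen.trans _ _ _ ih1 ih2

lemma eqvStrictL {i j k : Interaction L M} (h : BRel i j) :
    BRel (Interaction.strict i k) (Interaction.strict j k) := by
  induction h with
  | rel _ _ h => exact EqvGen.rel _ _ (Rw.strictCongrL h)
  | refl _ => exact EqvGen.refl _
  | symm _ _ _ ih => exact EqvGen.symm _ _ ih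
  | trans _ _ _ _ _ ih1 ih2 => exact EqvGen.trans _ _ _ ih1 ih2

lemma eqvStrictR {k i j : Interaction L M} (h : BRel i j) :
    BRel (Interaction.strict k i) (Interaction.strict k j) := by
  induction h with
  | rel _ _ h => exact EqvGen.rel _ _ (Rw.strictCongrR h)
  | refl _ => exact EqvGen.refl _
  | symm _ _ _ ih => exact EqvGen.symm _ _ ih
  | trans _ _ _ _ _ ih1 ih2 => exact EqvGen.trans _ _ _ ih1 ih2

lemma eqvStrict {i1 j1 i2 j2 : Interaction L M} (h1 : BRel i1 j1) (h2 : BRel i2 j2) :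
    BRel (Interaction.strict i1 i2) (Interaction.strict j1 j2) :=
  EqvGen.trans _ _ _ (eqvStrictL h1) (eqvStrictR h2)

lemma eqvAltL {i j k : Interaction L M} (h : BRel i j) :
    BRel (Interaction.alt i k) (Interaction.alt j k) := by
  induction h with
  | rel _ _ h => exact EqvGen.rel _ _ (Rw.altCongrL h)
  | refl _ => exact EqvGen.refl _
  | symm _ _ _ ih => exact EqvGen.symm _ _ ih
  | trans _ _ _ _ _ ih1 ih2 => exact EqvGen.trans _ _ _ ih1 ih2

lemma eqvAltR {k i j : Interaction L M} (h : BRel i j) :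
    BRel (Interaction.alt k i) (Interaction.alt k j) := by
  induction h with
  | rel _ _ h => exact EqvGen.rel _ _ (Rw.altCongrR h)
  | refl _ => exact EqvGen.refl _
  | symm _ _ _ ih => exact EqvGen.symm _ _ ih
  | trans _ _ _ _ _ ih1 ih2 => exact EqvGen.trans _ _ _ ih1 ih2

lemma eqvAlt {i1 j1 i2 j2 : Interaction L M} (h1 : BRel i1 j1) (h2 : BRel i2 j2) :
    BRel (Interaction.alt i1 i2) (Interaction.alt j1 j2) :=
  EqvGen.trans _ _ _ (eqvAltL h1) (eqvAltR h2)

lemma eqvCrL {ℓ : Set L} {i j k : Interaction L M} (h : BRel i j) :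
    BRel (Interaction.cr ℓ i k) (Interaction.cr ℓ j k) := by
  induction h with
  | rel _ _ h => exact EqvGen.rel _ _ (Rw.crCongrL h)
  | refl _ => exact EqvGen.refl _
  | symm _ _ _ ih => exact EqvGen.symm _ _ ih
  | trans _ _ _ _ _ ih1 ih2 => exact EqvGen.trans _ _ _ ih1 ih2

lemma eqvCrR {ℓ : Set L} {k i j : Interaction L M} (h : BRel i j) :
    BRel (Interaction.cr ℓ k i) (Interaction.cr ℓ k j) := by
  induction h with
  | rel _ _ h => exact EqvGen.rel _ _ (Rw.crCongrR h)
  | refl _ => exact EqvGen.refl _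
  | symm _ _ _ ih => exact EqvGen.symm _ _ ih
  | trans _ _ _ _ _ ih1 ih2 => exact EqvGen.trans _ _ _ ih1 ih2

lemma eqvCr {ℓ : Set L} {i1 j1 i2 j2 : Interaction L M} (h1 : BRel i1 j1) (h2 : BRel i2 j2) :
    BRel (Interaction.cr ℓ i1 i2) (Interaction.cr ℓ j1 j2) :=
  EqvGen.trans _ _ _ (eqvCrL h1) (eqvCrR h2)

/-! Evades simp lemmas -/

@[simp] lemma evades_empty {ℓ : Set L} : Evades (Interaction.empty : Interaction L M) ℓ :=
  .empty ℓ

@[simp] lemma evades_loopS {i : Interaction L M} {ℓ : Set L} :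
    Evades (Interaction.loopS i) ℓ := .loopS i ℓ

@[simp] lemma evades_act_iff {a : MyAction L M} {ℓ : Set L} :
    Evades (Interaction.act a) ℓ ↔ a.lifeline ∉ ℓ :=
  ⟨fun h => by cases h; assumption, fun h => .act a ℓ h⟩

@[simp] lemma evades_strict_iff {i1 i2 : Interaction L M} {ℓ : Set L} :
    Evades (Interaction.strict i1 i2) ℓ ↔ Evades i1 ℓ ∧ Evades i2 ℓ :=
  ⟨fun h => by cases h with | strict h1 h2 => exact ⟨h1, h2⟩, fun ⟨h1, h2⟩ => .strict h1 h2⟩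

@[simp] lemma evades_cr_iff {ℓ' : Set L} {i1 i2 : Interaction L M} {ℓ : Set L} :
    Evades (Interaction.cr ℓ' i1 i2) ℓ ↔ Evades i1 ℓ ∧ Evades i2 ℓ :=
  ⟨fun h => by cases h with | cr h1 h2 => exact ⟨h1, h2⟩, fun ⟨h1, h2⟩ => .cr h1 h2⟩

@[simp] lemma evades_alt_iff {i1 i2 : Interaction L M} {ℓ : Set L} :
    Evades (Interaction.alt i1 i2) ℓ ↔ Evades i1 ℓ ∨ Evades i2 ℓ :=
  ⟨fun h => by cases h with | altL h => exact Or.inl h | altR h => exact Or.inr h,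
   fun h => h.elim .altL .altR⟩

lemma rw_evades {i j : Interaction L M} (h : Rw i j) (ℓ : Set L) :
    Evades i ℓ ↔ Evades j ℓ := by
  induction h with
  | strictEmptyL x => simp
  | strictEmptyR x => simp
  | crEmptyL ℓ' x => simp
  | crEmptyR ℓ' x => simp
  | altEmptyLoop x => simp
  | altLoopEmpty x => simp
  | altEmptyEmpty => simp
  | loopEmpty => simp
  | loopCongr h ih => simp
  | strictCongrL h ih => simp [ih]
  | strictCongrR h ih => simp [ih]
  | altCongrL h ih => simp [ih]
  | altCongrR h ih => simp [ih]
  | crCongrL h ih => simp [ih]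
  | crCongrR h ih => simp [ih]

lemma eqv_evades {i j : Interaction L M} (h : BRel i j) (ℓ : Set L) :
    Evades i ℓ ↔ Evades j ℓ := by
  induction h with
  | rel _ _ h => exact rw_evades h ℓ
  | refl _ => exact Iff.rfl
  | symm _ _ _ ih => exact ih.symm
  | trans _ _ _ _ _ ih1 ih2 => exact ih1.trans ih2

/-! NoExpr simp lemmas -/

@[simp] lemma noexpr_empty {a : MyAction L M} :
    NoExpr (Interaction.empty : Interaction L M) a := .empty a

@[simp] lemma noexpr_act_iff {a' a : MyAction L M} :
    NoExpr (Interaction.act a') a ↔ a' ≠ a :=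
  ⟨fun h => by cases h; assumption, fun h => .act h⟩

@[simp] lemma noexpr_loopS_iff {i : Interaction L M} {a : MyAction L M} :
    NoExpr (Interaction.loopS i) a ↔ NoExpr i a :=
  ⟨fun h => by cases h; assumption, fun h => .loopS h⟩

@[simp] lemma noexpr_strict_iff {i1 i2 : Interaction L M} {a : MyAction L M} :
    NoExpr (Interaction.strict i1 i2) a ↔
      NoExpr i1 a ∧ (¬ Evades i1 Set.univ ∨ NoExpr i2 a) := by
  constructor
  · intro h
    cases h with
    | strictNoEvade h1 h2 => exact ⟨h1, Or.inl h2⟩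
    | strictBoth h1 h2 => exact ⟨h1, Or.inr h2⟩
  · rintro ⟨h1, h2 | h2⟩
    · exact .strictNoEvade h1 h2
    · exact .strictBoth h1 h2

@[simp] lemma noexpr_cr_iff {ℓ : Set L} {i1 i2 : Interaction L M} {a : MyAction L M} :
    NoExpr (Interaction.cr ℓ i1 i2) a ↔
      NoExpr i1 a ∧ (¬ Evades i1 ({a.lifeline} \ ℓ) ∨ NoExpr i2 a) := by
  constructor
  · intro h
    cases h with
    | crNoEvade h1 h2 => exact ⟨h1, Or.inl h2⟩
    | crBoth h1 h2 => exact ⟨h1, Or.inr h2⟩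
  · rintro ⟨h1, h2 | h2⟩
    · exact .crNoEvade h1 h2
    · exact .crBoth h1 h2

@[simp] lemma noexpr_alt_iff {i1 i2 : Interaction L M} {a : MyAction L M} :
    NoExpr (Interaction.alt i1 i2) a ↔ NoExpr i1 a ∧ NoExpr i2 a :=
  ⟨fun h => by cases h with | alt h1 h2 => exact ⟨h1, h2⟩, fun ⟨h1, h2⟩ => .alt h1 h2⟩

lemma rw_noexpr {i j : Interaction L M} (h : Rw i j) (a : MyAction L M) :
    NoExpr i a ↔ NoExpr j a := by
  induction h with
  | strictEmptyL x => simp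
  | strictEmptyR x => simp
  | crEmptyL ℓ' x => simp
  | crEmptyR ℓ' x => simp
  | altEmptyLoop x => simp
  | altLoopEmpty x => simp
  | altEmptyEmpty => simp
  | loopEmpty => simp
  | loopCongr h ih => simp [ih]
  | strictCongrL h ih => simp [ih, rw_evades h]
  | strictCongrR h ih => simp [ih]
  | altCongrL h ih => simp [ih]
  | altCongrR h ih => simp [ih]
  | crCongrL h ih => simp [ih, rw_evades h]
  | crCongrR h ih => simp [ih]

/-! Prune -/

lemma prune_evades {i p : Interaction L M} {ℓ : Set L} (h : Prune i ℓ p) : Evades i ℓ := by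
  induction h with
  | empty => simp
  | act a ℓ h => exact .act a ℓ h
  | altL _ _ ih => exact .altL ih
  | altR _ _ ih => exact .altR ih
  | altBoth _ _ ih1 _ => exact .altL ih1
  | strict _ _ ih1 ih2 => exact .strict ih1 ih2
  | cr _ _ ih1 ih2 => exact .cr ih1 ih2
  | loopS _ _ => simp
  | loopSElim _ => simp

lemma exists_prune {i : Interaction L M} {ℓ : Set L} (h : Evades i ℓ) :
    ∃ p, Prune i ℓ p := by
  induction i with
  | empty => exact ⟨_, .empty ℓ⟩
  | act a => cases h with | act _ _ h => exact ⟨_, .act a ℓ h⟩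
  | loopS i1 ih =>
    by_cases h1 : Evades i1 ℓ
    · obtain ⟨p, hp⟩ := ih h1
      exact ⟨_, .loopS hp⟩
    · exact ⟨_, .loopSElim h1⟩
  | strict i1 i2 ih1 ih2 =>
    cases h with
    | strict h1 h2 =>
      obtain ⟨p1, hp1⟩ := ih1 h1
      obtain ⟨p2, hp2⟩ := ih2 h2
      exact ⟨_, .strict hp1 hp2⟩
  | alt i1 i2 ih1 ih2 =>
    by_cases h1 : Evades i1 ℓ <;> by_cases h2 : Evades i2 ℓ
    · obtain ⟨p1, hp1⟩ := ih1 h1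
      obtain ⟨p2, hp2⟩ := ih2 h2
      exact ⟨_, .altBoth hp1 hp2⟩
    · obtain ⟨p1, hp1⟩ := ih1 h1
      exact ⟨_, .altL hp1 h2⟩
    · obtain ⟨p2, hp2⟩ := ih2 h2
      exact ⟨_, .altR hp2 h1⟩
    · cases h with
      | altL h => exact absurd h h1
      | altR h => exact absurd h h2
  | cr ℓ' i1 i2 ih1 ih2 =>
    cases h with
    | cr hh1 hh2 =>
      obtain ⟨p1, hp1⟩ := ih1 hh1
      obtain ⟨p2, hp2⟩ := ih2 hh2
      exact ⟨_, .cr hp1 hp2⟩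

lemma prune_unique {i p q : Interaction L M} {ℓ : Set L}
    (hp : Prune i ℓ p) (hq : Prune i ℓ q) : p = q := by
  induction hp generalizing q with
  | empty => cases hq; rfl
  | act => cases hq; rfl
  | altL h1 hne ih =>
    cases hq with
    | altL h _ => exact ih h
    | altR h hne' => exact absurd (prune_evades h1) hne'
    | altBoth _ h2 => exact absurd (prune_evades h2) hne
  | altR h2 hne ih =>
    cases hq with
    | altL h hne' => exact absurd (prune_evades h2) hne'
    | altR h _ => exact ih h
    | altBoth h1 _ => exact absurd (prune_evades h1) hne
  | altBoth h1 h2 ih1 ih2 =>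
    cases hq with
    | altL _ hne => exact absurd (prune_evades h2) hne
    | altR _ hne => exact absurd (prune_evades h1) hne
    | altBoth g1 g2 => rw [ih1 g1, ih2 g2]
  | strict h1 h2 ih1 ih2 =>
    cases hq with
    | strict g1 g2 => rw [ih1 g1, ih2 g2]
  | cr h1 h2 ih1 ih2 =>
    cases hq with
    | cr g1 g2 => rw [ih1 g1, ih2 g2]
  | loopS h1 ih =>
    cases hq with
    | loopS g => rw [ih g]
    | loopSElim hne => exact absurd (prune_evades h1) hne
  | loopSElim hne =>
    cases hq with
    | loopS g => exact absurd (prune_evades g) hne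
    | loopSElim _ => rfl

lemma rw_prune_fwd {i j : Interaction L M} (h : Rw i j) :
    ∀ {ℓ : Set L} {p : Interaction L M}, Prune i ℓ p → ∃ q, Prune j ℓ q ∧ BRel p q := by
  induction h with
  | strictEmptyL x =>
    intro ℓ p hp
    cases hp with
    | strict h1 h2 => cases h1; exact ⟨_, h2, EqvGen.rel _ _ (Rw.strictEmptyL _)⟩
  | strictEmptyR x =>
    intro ℓ p hp
    cases hp with
    | strict h1 h2 => cases h2; exact ⟨_, h1, EqvGen.rel _ _ (Rw.strictEmptyR _)⟩
  | crEmptyL ℓ' x =>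
    intro ℓ p hp
    cases hp with
    | cr h1 h2 => cases h1; exact ⟨_, h2, EqvGen.rel _ _ (Rw.crEmptyL _ _)⟩
  | crEmptyR ℓ' x =>
    intro ℓ p hp
    cases hp with
    | cr h1 h2 => cases h2; exact ⟨_, h1, EqvGen.rel _ _ (Rw.crEmptyR _ _)⟩
  | altEmptyLoop x =>
    intro ℓ p hp
    cases hp with
    | altL _ hne => exact absurd evades_loopS hne
    | altR _ hne => exact absurd evades_empty hne
    | altBoth h1 h2 =>
      cases h1
      cases h2 with
      | loopS g => exact ⟨_, .loopS g, EqvGen.rel _ _ (Rw.altEmptyLoop _)⟩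
      | loopSElim hne => exact ⟨_, .loopSElim hne, EqvGen.rel _ _ Rw.altEmptyEmpty⟩
  | altLoopEmpty x =>
    intro ℓ p hp
    cases hp with
    | altL _ hne => exact absurd evades_empty hne
    | altR _ hne => exact absurd evades_loopS hne
    | altBoth h1 h2 =>
      cases h2
      cases h1 with
      | loopS g => exact ⟨_, .loopS g, EqvGen.rel _ _ (Rw.altLoopEmpty _)⟩
      | loopSElim hne => exact ⟨_, .loopSElim hne, EqvGen.rel _ _ Rw.altEmptyEmpty⟩
  | altEmptyEmpty =>
    intro ℓ p hp
    cases hp with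
    | altL _ hne => exact absurd evades_empty hne
    | altR _ hne => exact absurd evades_empty hne
    | altBoth h1 h2 =>
      cases h1; cases h2
      exact ⟨_, .empty ℓ, EqvGen.rel _ _ Rw.altEmptyEmpty⟩
  | loopEmpty =>
    intro ℓ p hp
    cases hp with
    | loopS g => cases g; exact ⟨_, .empty ℓ, EqvGen.rel _ _ Rw.loopEmpty⟩
    | loopSElim hne => exact absurd evades_empty hne
  | loopCongr h ih =>
    intro ℓ p hp
    cases hp with
    | loopS g =>
      obtain ⟨q, hq, hb⟩ := ih g
      exact ⟨_, .loopS hq, eqvLoopS hb⟩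
    | loopSElim hne =>
      exact ⟨_, .loopSElim (fun he => hne ((rw_evades h ℓ).2 he)), EqvGen.refl _⟩
  | strictCongrL h ih =>
    intro ℓ p hp
    cases hp with
    | strict h1 h2 =>
      obtain ⟨q, hq, hb⟩ := ih h1
      exact ⟨_, .strict hq h2, eqvStrictL hb⟩
  | strictCongrR h ih =>
    intro ℓ p hp
    cases hp with
    | strict h1 h2 =>
      obtain ⟨q, hq, hb⟩ := ih h2
      exact ⟨_, .strict h1 hq, eqvStrictR hb⟩
  | altCongrL h ih =>
    intro ℓ p hp
    cases hp with
    | altL h1 hne =>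
      obtain ⟨q, hq, hb⟩ := ih h1
      exact ⟨_, .altL hq hne, hb⟩
    | altR h2 hne =>
      exact ⟨_, .altR h2 (fun he => hne ((rw_evades h ℓ).2 he)), EqvGen.refl _⟩
    | altBoth h1 h2 =>
      obtain ⟨q, hq, hb⟩ := ih h1
      exact ⟨_, .altBoth hq h2, eqvAltL hb⟩
  | altCongrR h ih =>
    intro ℓ p hp
    cases hp with
    | altL h1 hne =>
      exact ⟨_, .altL h1 (fun he => hne ((rw_evades h ℓ).2 he)), EqvGen.refl _⟩
    | altR h2 hne =>
      obtain ⟨q, hq, hb⟩ := ih h2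
      exact ⟨_, .altR hq hne, hb⟩
    | altBoth h1 h2 =>
      obtain ⟨q, hq, hb⟩ := ih h2
      exact ⟨_, .altBoth h1 hq, eqvAltR hb⟩
  | crCongrL h ih =>
    intro ℓ p hp
    cases hp with
    | cr h1 h2 =>
      obtain ⟨q, hq, hb⟩ := ih h1
      exact ⟨_, .cr hq h2, eqvCrL hb⟩
  | crCongrR h ih =>
    intro ℓ p hp
    cases hp with
    | cr h1 h2 =>
      obtain ⟨q, hq, hb⟩ := ih h2
      exact ⟨_, .cr h1 hq, eqvCrR hb⟩

lemma rw_prune_bwd {i j : Interaction L M} (h : Rw i j) {ℓ : Set L} {q : Interaction L M}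
    (hq : Prune j ℓ q) : ∃ p, Prune i ℓ p ∧ BRel p q := by
  obtain ⟨p, hp⟩ := exists_prune ((rw_evades h ℓ).2 (prune_evades hq))
  obtain ⟨q', hq', hb⟩ := rw_prune_fwd h hp
  exact ⟨p, hp, (prune_unique hq' hq) ▸ hb⟩

/-! Exec bisimulation -/

lemma rw_exec_fwd {i j : Interaction L M} (h : Rw i j) :
    ∀ {a : MyAction L M} {i' : Interaction L M}, Exec i a i' →
      ∃ j', Exec j a j' ∧ BRel i' j' := by
  induction h with
  | strictEmptyL x =>
    intro a i' he
    cases he with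
    | strictL h1 => cases h1
    | strictR h2 _ => exact ⟨_, h2, EqvGen.refl _⟩
  | strictEmptyR x =>
    intro a i' he
    cases he with
    | strictL h1 => exact ⟨_, h1, EqvGen.rel _ _ (Rw.strictEmptyR _)⟩
    | strictR h2 _ => cases h2
  | crEmptyL ℓ x =>
    intro a i' he
    cases he with
    | crL h1 => cases h1
    | crR h2 hp => cases hp; exact ⟨_, h2, EqvGen.rel _ _ (Rw.crEmptyL _ _)⟩
  | crEmptyR ℓ x =>
    intro a i' he
    cases he with
    | crL h1 => exact ⟨_, h1, EqvGen.rel _ _ (Rw.crEmptyR _ _)⟩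
    | crR h2 _ => cases h2
  | altEmptyLoop x =>
    intro a i' he
    cases he with
    | altChoiceL h1 _ => cases h1
    | altChoiceR h2 _ => exact ⟨_, h2, EqvGen.refl _⟩
    | altDelay h1 _ => cases h1
  | altLoopEmpty x =>
    intro a i' he
    cases he with
    | altChoiceL h1 _ => exact ⟨_, h1, EqvGen.refl _⟩
    | altChoiceR h2 _ => cases h2
    | altDelay _ h2 => cases h2
  | altEmptyEmpty =>
    intro a i' he
    cases he with
    | altChoiceL h1 _ => cases h1
    | altChoiceR h2 _ => cases h2
    | altDelay h1 _ => cases h1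
  | loopEmpty =>
    intro a i' he
    cases he with
    | loop h1 => cases h1
  | loopCongr h ih =>
    intro a i' he
    cases he with
    | loop h1 =>
      obtain ⟨q, hq, hb⟩ := ih h1
      exact ⟨_, .loop hq, eqvStrict hb (EqvGen.rel _ _ (Rw.loopCongr h))⟩
  | strictCongrL h ih =>
    intro a i' he
    cases he with
    | strictL h1 =>
      obtain ⟨q, hq, hb⟩ := ih h1
      exact ⟨_, .strictL hq, eqvStrictL hb⟩
    | strictR h2 hev => exact ⟨_, .strictR h2 ((rw_evades h _).1 hev), EqvGen.refl _⟩
  | strictCongrR h ih =>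
    intro a i' he
    cases he with
    | strictL h1 => exact ⟨_, .strictL h1, eqvStrictR (EqvGen.rel _ _ h)⟩
    | strictR h2 hev =>
      obtain ⟨q, hq, hb⟩ := ih h2
      exact ⟨_, .strictR hq hev, hb⟩
  | crCongrL h ih =>
    intro a i' he
    cases he with
    | crL h1 =>
      obtain ⟨q, hq, hb⟩ := ih h1
      exact ⟨_, .crL hq, eqvCrL hb⟩
    | crR h2 hp =>
      obtain ⟨p', hp', hbp⟩ := rw_prune_fwd h hp
      exact ⟨_, .crR h2 hp', eqvCrL hbp⟩
  | crCongrR h ih =>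
    intro a i' he
    cases he with
    | crL h1 => exact ⟨_, .crL h1, eqvCrR (EqvGen.rel _ _ h)⟩
    | crR h2 hp =>
      obtain ⟨q, hq, hb⟩ := ih h2
      exact ⟨_, .crR hq hp, eqvCrR hb⟩
  | altCongrL h ih =>
    intro a i' he
    cases he with
    | altChoiceL h1 hne =>
      obtain ⟨q, hq, hb⟩ := ih h1
      exact ⟨_, .altChoiceL hq hne, hb⟩
    | altChoiceR h2 hne => exact ⟨_, .altChoiceR h2 ((rw_noexpr h _).1 hne), EqvGen.refl _⟩
    | altDelay h1 h2 =>
      obtain ⟨q, hq, hb⟩ := ih h1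
      exact ⟨_, .altDelay hq h2, eqvAltL hb⟩
  | altCongrR h ih =>
    intro a i' he
    cases he with
    | altChoiceL h1 hne => exact ⟨_, .altChoiceL h1 ((rw_noexpr h _).1 hne), EqvGen.refl _⟩
    | altChoiceR h2 hne =>
      obtain ⟨q, hq, hb⟩ := ih h2
      exact ⟨_, .altChoiceR hq hne, hb⟩
    | altDelay h1 h2 =>
      obtain ⟨q, hq, hb⟩ := ih h2
      exact ⟨_, .altDelay h1 hq, eqvAltR hb⟩

lemma rw_exec_bwd {i j : Interaction L M} (h : Rw i j) :
    ∀ {a : MyAction L M} {j' : Interaction L M}, Exec j a j' →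
      ∃ i', Exec i a i' ∧ BRel i' j' := by
  induction h with
  | strictEmptyL x =>
    intro a j' he
    exact ⟨_, .strictR he evades_empty, EqvGen.refl _⟩
  | strictEmptyR x =>
    intro a j' he
    exact ⟨_, .strictL he, EqvGen.rel _ _ (Rw.strictEmptyR _)⟩
  | crEmptyL ℓ x =>
    intro a j' he
    exact ⟨_, .crR he (.empty _), EqvGen.rel _ _ (Rw.crEmptyL _ _)⟩
  | crEmptyR ℓ x =>
    intro a j' he
    exact ⟨_, .crL he, EqvGen.rel _ _ (Rw.crEmptyR _ _)⟩
  | altEmptyLoop x =>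
    intro a j' he
    exact ⟨_, .altChoiceR he noexpr_empty, EqvGen.refl _⟩
  | altLoopEmpty x =>
    intro a j' he
    exact ⟨_, .altChoiceL he noexpr_empty, EqvGen.refl _⟩
  | altEmptyEmpty => intro a j' he; cases he
  | loopEmpty => intro a j' he; cases he
  | loopCongr h ih =>
    intro a j' he
    cases he with
    | loop h1 =>
      obtain ⟨p, hp, hb⟩ := ih h1
      exact ⟨_, .loop hp, eqvStrict hb (EqvGen.rel _ _ (Rw.loopCongr h))⟩
  | strictCongrL h ih =>
    intro a j' he
    cases he with
    | strictL h1 =>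
      obtain ⟨p, hp, hb⟩ := ih h1
      exact ⟨_, .strictL hp, eqvStrictL hb⟩
    | strictR h2 hev => exact ⟨_, .strictR h2 ((rw_evades h _).2 hev), EqvGen.refl _⟩
  | strictCongrR h ih =>
    intro a j' he
    cases he with
    | strictL h1 => exact ⟨_, .strictL h1, eqvStrictR (EqvGen.rel _ _ h)⟩
    | strictR h2 hev =>
      obtain ⟨p, hp, hb⟩ := ih h2
      exact ⟨_, .strictR hp hev, hb⟩
  | crCongrL h ih =>
    intro a j' he
    cases he with
    | crL h1 =>
      obtain ⟨p, hp, hb⟩ := ih h1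
      exact ⟨_, .crL hp, eqvCrL hb⟩
    | crR h2 hp =>
      obtain ⟨p', hp', hbp⟩ := rw_prune_bwd h hp
      exact ⟨_, .crR h2 hp', eqvCrL hbp⟩
  | crCongrR h ih =>
    intro a j' he
    cases he with
    | crL h1 => exact ⟨_, .crL h1, eqvCrR (EqvGen.rel _ _ h)⟩
    | crR h2 hp =>
      obtain ⟨p, hp', hb⟩ := ih h2
      exact ⟨_, .crR hp' hp, eqvCrR hb⟩
  | altCongrL h ih =>
    intro a j' he
    cases he with
    | altChoiceL h1 hne =>
      obtain ⟨p, hp, hb⟩ := ih h1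
      exact ⟨_, .altChoiceL hp hne, hb⟩
    | altChoiceR h2 hne => exact ⟨_, .altChoiceR h2 ((rw_noexpr h _).2 hne), EqvGen.refl _⟩
    | altDelay h1 h2 =>
      obtain ⟨p, hp, hb⟩ := ih h1
      exact ⟨_, .altDelay hp h2, eqvAltL hb⟩
  | altCongrR h ih =>
    intro a j' he
    cases he with
    | altChoiceL h1 hne => exact ⟨_, .altChoiceL h1 ((rw_noexpr h _).2 hne), EqvGen.refl _⟩
    | altChoiceR h2 hne =>
      obtain ⟨p, hp, hb⟩ := ih h2
      exact ⟨_, .altChoiceR hp hne, hb⟩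
    | altDelay h1 h2 =>
      obtain ⟨p, hp, hb⟩ := ih h2
      exact ⟨_, .altDelay h1 hp, eqvAltR hb⟩

lemma eqv_exec {i j : Interaction L M} (h : BRel i j) :
    (∀ (a : MyAction L M) i', Exec i a i' → ∃ j', Exec j a j' ∧ BRel i' j') ∧
    (∀ (a : MyAction L M) j', Exec j a j' → ∃ i', Exec i a i' ∧ BRel i' j') := by
  induction h with
  | rel _ _ h =>
    exact ⟨fun a i' he => rw_exec_fwd h he, fun a j' he => rw_exec_bwd h he⟩
  | refl _ =>
    exact ⟨fun a i' he => ⟨i', he, EqvGen.refl _⟩, fun a j' he => ⟨j', he, EqvGen.refl _⟩⟩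
  | symm x y _ ih =>
    refine ⟨fun a i' he => ?_, fun a j' he => ?_⟩
    · obtain ⟨q, hq, hb⟩ := ih.2 a i' he
      exact ⟨q, hq, EqvGen.symm _ _ hb⟩
    · obtain ⟨q, hq, hb⟩ := ih.1 a j' he
      exact ⟨q, hq, EqvGen.symm _ _ hb⟩
  | trans x y z _ _ ih1 ih2 =>
    refine ⟨fun a i' he => ?_, fun a j' he => ?_⟩
    · obtain ⟨q, hq, hb⟩ := ih1.1 a i' he
      obtain ⟨r, hr, hb'⟩ := ih2.1 a q hq
      exact ⟨r, hr, EqvGen.trans _ _ _ hb hb'⟩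
    · obtain ⟨q, hq, hb⟩ := ih2.2 a j' he
      obtain ⟨r, hr, hb'⟩ := ih1.2 a q hq
      exact ⟨r, hr, EqvGen.trans _ _ _ hb' hb⟩

lemma eqv_sem {i j : Interaction L M} (h : BRel i j) {t : List (MyAction L M)}
    (hs : Sem i t) : Sem j t := by
  induction hs generalizing j with
  | nil hev => exact .nil ((eqv_evades h _).1 hev)
  | cons hx _ ih =>
    obtain ⟨j', hj', hb⟩ := (eqv_exec h).1 _ _ hx
    exact .cons hj' (ih hb)

lemma reach_exec {i0 i i' : Interaction L M} {a : MyAction L M}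
    (hi : i ∈ Reach i0) (h : Exec i a i') : i' ∈ Reach i0 :=
  Relation.ReflTransGen.tail hi ⟨a, h⟩

end Interaction


open Interaction

/-- The simplified automaton `nfa_s(i0)`, where `ns` maps each interaction to its
(unique) `R`-normal form: states are the normal forms of the interactions reachable
from `i0`, the initial state is `ns i0`, a state is accepting iff it is the normal
form of some reachable interaction evading all lifelines, and there is a transition
`ns i —a→ ns i'` for each pair of reachable interactions `i`, `i'` with `i →a i'`. -/
def nfaS {L M : Type} (ns : Interaction L M → Interaction L M) (i0 : Interaction L M) :
    NFA (MyAction L M) (ns '' Reach i0) where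
  step q a := {q' | ∃ i ∈ Reach i0, ∃ i' ∈ Reach i0, Exec i a i' ∧ ns i = q.1 ∧ ns i' = q'.1}
  start := {⟨ns i0, ⟨i0, Relation.ReflTransGen.refl, rfl⟩⟩}
  accept := {q | ∃ i ∈ Reach i0, Evades i Set.univ ∧ ns i = q.1}

/-! NFA path characterization -/

open Relation in
def NPath {α σ : Type*} (N : NFA α σ) : σ → List α → σ → Prop
  | p, [], q => p = q
  | p, a :: t, q => ∃ r ∈ N.step p a, NPath N r t q

lemma mem_evalFrom_iff_npath {α σ : Type*} (N : NFA α σ) :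
    ∀ (t : List α) (S : Set σ) (q : σ),
      q ∈ N.evalFrom S t ↔ ∃ p ∈ S, NPath N p t q := by
  intro t
  induction t with
  | nil =>
    intro S q
    show q ∈ S ↔ _
    simp [NPath]
  | cons a t ih =>
    intro S q
    rw [show N.evalFrom S (a :: t) = N.evalFrom (N.stepSet S a) t from rfl, ih]
    constructor
    · rintro ⟨r, hr, hp⟩
      rw [NFA.mem_stepSet] at hr
      obtain ⟨p, hpS, hr⟩ := hr
      exact ⟨p, hpS, r, hr, hp⟩
    · rintro ⟨p, hpS, r, hr, hp⟩
      exact ⟨r, NFA.mem_stepSet.2 ⟨p, hpS, hr⟩, hp⟩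

section MainLemmas

open Relation

variable {L M : Type} (ns : Interaction L M → Interaction L M)
  (hns : ∀ i, Relation.ReflTransGen Rw i (ns i) ∧ ∀ j, ¬ Rw (ns i) j)
  (i0 : Interaction L M)

include hns

lemma eqv_of_ns_eq {i j : Interaction L M} (h : ns i = ns j) : BRel i j := by
  refine EqvGen.trans _ _ _ (rtg_eqv (hns i).1) ?_
  rw [h]
  exact EqvGen.symm _ _ (rtg_eqv (hns j).1)

lemma path_sem :
    ∀ (t : List (MyAction L M)) (i : Interaction L M) (hi : i ∈ Reach i0)
      (q : ↥(ns '' Reach i0)),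
      NPath (nfaS ns i0) ⟨ns i, ⟨i, hi, rfl⟩⟩ t q → q ∈ (nfaS ns i0).accept → Sem i t := by
  intro t
  induction t with
  | nil =>
    intro i hi q hpath hacc
    obtain ⟨j, hj, hev, hnsj⟩ := hacc
    rw [← hpath] at hnsj
    exact Sem.nil ((eqv_evades (eqv_of_ns_eq ns hns hnsj) _).1 hev)
  | cons a t ih =>
    intro i hi q hpath hacc
    obtain ⟨r, hr, hp⟩ := hpath
    obtain ⟨j, hj, j', hj', hex, hnsji, hnsr⟩ := hr
    have hb : BRel j i := eqv_of_ns_eq ns hns hnsji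
    obtain ⟨i'', hexi, hbi⟩ := (eqv_exec hb).1 a j' hex
    have hr_eq : r = ⟨ns j', ⟨j', hj', rfl⟩⟩ := Subtype.ext hnsr.symm
    rw [hr_eq] at hp
    have hsem : Sem j' t := ih j' hj' q hp hacc
    exact Sem.cons hexi (eqv_sem hbi hsem)

omit hns in
lemma sem_path {i : Interaction L M} {t : List (MyAction L M)} (hs : Sem i t) :
    ∀ (hi : i ∈ Reach i0),
      ∃ q ∈ (nfaS ns i0).accept, NPath (nfaS ns i0) ⟨ns i, ⟨i, hi, rfl⟩⟩ t q := by
  induction hs with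
  | @nil i hev =>
    intro hi
    exact ⟨⟨ns i, ⟨i, hi, rfl⟩⟩, ⟨i, hi, hev, rfl⟩, rfl⟩
  | @cons i i' a t hex _ ih =>
    intro hi
    have hi' : i' ∈ Reach i0 := reach_exec hi hex
    obtain ⟨q, hq, hpath⟩ := ih hi'
    exact ⟨q, hq, ⟨ns i', ⟨i', hi', rfl⟩⟩, ⟨i, hi, i', hi', hex, rfl, rfl⟩, hpath⟩

end MainLemmas

/-- for any normalization function `ns` sending each interaction to an
`R`-normal form reachable from it by rewriting (such a function exists and is unique
since `→_R` is convergent), the language recognized by the simplified automaton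
`nfa_s(i0)` equals the trace semantics `σ(i0)`. -/
theorem nfaS_accepts_eq_sem {L M : Type} [Finite L] [Finite M]
    (ns : Interaction L M → Interaction L M)
    (hns : ∀ i, Relation.ReflTransGen Rw i (ns i) ∧ ∀ j, ¬ Rw (ns i) j)
    (i0 : Interaction L M) :
    (nfaS ns i0).accepts = {t | Sem i0 t} := by
  ext t
  constructor
  · intro ht
    rw [NFA.mem_accepts] at ht
    obtain ⟨q, hq, hev⟩ := ht
    rw [mem_evalFrom_iff_npath] at hev
    obtain ⟨p, hpstart, hpath⟩ := hev
    have hp : p = ⟨ns i0, ⟨i0, Relation.ReflTransGen.refl, rfl⟩⟩ :=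
      Set.mem_singleton_iff.1 hpstart
    rw [hp] at hpath
    exact path_sem ns hns i0 t i0 Relation.ReflTransGen.refl q hpath hq
  · intro hs
    obtain ⟨q, hq, hpath⟩ := sem_path ns i0 hs Relation.ReflTransGen.refl
    rw [NFA.mem_accepts]
    exact ⟨q, hq, (mem_evalFrom_iff_npath _ _ _ _).2 ⟨_, rfl, hpath⟩⟩
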